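/- Let (Γ, N) be a numbered graph. A word over the standard generating set S is a geodesic of NGP(Γ, N) if and only if it is accepted by the geodesic automaton 𝒟 of (Γ, N). -/

import Mathlib

variable {V : Type*}

def ngpRels (G : SimpleGraph V) (N : V → ℕ) : Set (FreeGroup V) :=
  {r | (∃ v, r = FreeGroup.of v ^ N v) ∨
       (∃ u v, G.Adj u v ∧
          r = FreeGroup.of u * FreeGroup.of v * (FreeGroup.of u)⁻¹ * (FreeGroup.of v)⁻¹)}

abbrev NGP (G : SimpleGraph V) (N : V → ℕ) := PresentedGroup (ngpRels G N)

def evalWord (G : SimpleGraph V) (N : V → ℕ) (w : List (V × Bool)) : NGP G N :=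
  (w.map fun l => if l.2 then (PresentedGroup.of l.1 : NGP G N) else (PresentedGroup.of l.1)⁻¹).prod

def ValidWord (N : V → ℕ) (w : List (V × Bool)) : Prop :=
  ∀ l ∈ w, l.2 = false → N l.1 ≠ 2

def IsGeodesic (G : SimpleGraph V) (N : V → ℕ) (w : List (V × Bool)) : Prop :=
  ValidWord N w ∧ ∀ w' : List (V × Bool), ValidWord N w' →
    evalWord G N w' = evalWord G N w → w.length ≤ w'.length

def IsPoweredClique (G : SimpleGraph V) (N : V → ℕ) (f : V → ℤ) : Prop :=
  G.IsClique {v | f v ≠ 0} ∧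
  ∀ v, (N v = 2 → 0 ≤ f v ∧ f v ≤ 1) ∧
       (N v ≠ 2 → -((N v / 2 : ℕ) : ℤ) ≤ f v ∧ f v ≤ ((N v / 2 : ℕ) : ℤ))

def step (G : SimpleGraph V) [DecidableRel G.Adj] [DecidableEq V] (N : V → ℕ)
    (f : V → ℤ) (l : V × Bool) : Option (V → ℤ) :=
  if l.2 then
    if 0 ≤ f l.1 ∧ f l.1 < ((N l.1 / 2 : ℕ) : ℤ) then
      some fun u => if u = l.1 then f l.1 + 1 else if G.Adj l.1 u then f u else 0
    else none
  else
    if N l.1 ≠ 2 ∧ -((N l.1 / 2 : ℕ) : ℤ) < f l.1 ∧ f l.1 ≤ 0 then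
      some fun u => if u = l.1 then f l.1 - 1 else if G.Adj l.1 u then f u else 0
    else none

def run (G : SimpleGraph V) [DecidableRel G.Adj] [DecidableEq V] (N : V → ℕ) :
    (V → ℤ) → List (V × Bool) → Option (V → ℤ)
  | f, [] => some f
  | f, l :: w =>
    match step G N f l with
    | none => none
    | some g => run G N g w

def Accepts (G : SimpleGraph V) [DecidableRel G.Adj] [DecidableEq V] (N : V → ℕ)
    (f : V → ℤ) (w : List (V × Bool)) : Prop :=
  ∃ g, run G N f w = some g ∧ IsPoweredClique G N g


namespace NGPproof

def red (N : V → ℕ) (v : V) (k : ℤ) : ℤ :=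
  (k + ((N v - 1) / 2 : ℕ)) % (N v : ℤ) - ((N v - 1) / 2 : ℕ)

section RedLemmas
variable {N : V → ℕ}
set_option linter.unusedSectionVars false
variable {v : V} (hv : 2 ≤ N v)

lemma red_emod (k : ℤ) : red N v k % (N v : ℤ) = k % (N v : ℤ) := by
  unfold red
  rw [Int.sub_emod, Int.emod_emod_of_dvd _ (dvd_refl _), ← Int.sub_emod, add_sub_cancel_right]

lemma red_congr {a b : ℤ} (h : a % (N v : ℤ) = b % (N v : ℤ)) : red N v a = red N v b := by
  unfold red
  rw [Int.add_emod, h, ← Int.add_emod]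

include hv

lemma red_bounds (k : ℤ) :
    -(((N v - 1) / 2 : ℕ) : ℤ) ≤ red N v k ∧
      red N v k ≤ (N v : ℤ) - 1 - ((N v - 1) / 2 : ℕ) := by
  have hNpos : (0:ℤ) < (N v : ℤ) := by exact_mod_cast Nat.lt_of_lt_of_le Nat.zero_lt_two hv
  have h1 := Int.emod_nonneg (k + ((N v - 1) / 2 : ℕ)) (ne_of_gt hNpos)
  have h2 := Int.emod_lt_of_pos (k + ((N v - 1) / 2 : ℕ)) hNpos
  unfold red
  omega

lemma red_eq_self {k : ℤ} (h1 : -(((N v - 1) / 2 : ℕ) : ℤ) ≤ k)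
    (h2 : k ≤ (N v : ℤ) - 1 - ((N v - 1) / 2 : ℕ)) : red N v k = k := by
  unfold red
  rw [Int.emod_eq_of_lt (by omega) (by omega)]
  omega

lemma red_idem (k : ℤ) : red N v (red N v k) = red N v k :=
  red_eq_self hv (red_bounds hv k).1 (red_bounds hv k).2

lemma red_zero : red N v 0 = 0 := red_eq_self hv (by omega) (by
  have : ((N v - 1) / 2 : ℕ) ≤ N v - 1 := Nat.div_le_self _ _
  omega)

lemma red_eq_zero_iff {k : ℤ} : red N v k = 0 ↔ (N v : ℤ) ∣ k := by
  constructor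
  · intro h
    have := red_emod (v := v) (N := N) k
    rw [h] at this
    rw [Int.dvd_iff_emod_eq_zero, ← this, Int.zero_emod]
  · intro ⟨j, hj⟩
    subst hj
    rw [red_congr (b := 0) (by simp [Int.mul_emod_right]), red_zero hv]

lemma red_add_N (k : ℤ) : red N v (k + N v) = red N v k :=
  red_congr (by simp)

lemma red_add_red (a e : ℤ) : red N v (red N v a + e) = red N v (a + e) := by
  apply red_congr
  conv_lhs => rw [Int.add_emod, red_emod, ← Int.add_emod]

/-- key facts about `(N v - 1)/2` and `N v / 2` as integers -/
lemma c_facts : (2 * ((N v - 1) / 2 : ℕ) + 1 = N v ∨ 2 * ((N v - 1) / 2 : ℕ) + 2 = N v) ∧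
    (N v / 2 : ℕ) = N v - 1 - (N v - 1) / 2 := by omega

-- identity window: red = id on [-(c), N-1-c], and N/2 = N-1-c.
lemma red_eq_self' {k : ℤ} (h1 : -(((N v - 1) / 2 : ℕ) : ℤ) ≤ k)
    (h2 : k ≤ ((N v / 2 : ℕ) : ℤ)) : red N v k = k := by
  apply red_eq_self hv h1
  have := (c_facts hv).2
  omega

lemma red_one : red N v 1 = 1 := red_eq_self' hv (by omega) (by
  have : 1 ≤ N v / 2 := by omega
  omega)

lemma red_neg_one_of (h : N v ≠ 2) : red N v (-1) = -1 := by
  apply red_eq_self hv (by omega) (by have := (c_facts hv).1; omega)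

lemma red_neg_one_two (h : N v = 2) : red N v (-1) = 1 := by
  have h2 : red N v (-1) = red N v 1 := red_congr (by rw [h]; decide)
  rw [h2, red_one hv]

lemma natAbs_red_le {k : ℤ} (hk : red N v k = k) (e : ℤ) (he : e.natAbs = 1) :
    (red N v (k + e)).natAbs ≤ k.natAbs + 1 := by
  have hb := red_bounds hv (k + e)
  have hb' := red_bounds hv k
  rw [hk] at hb'
  have hc := (c_facts hv).1
  have he' : e = 1 ∨ e = -1 := by omega
  have hmod := red_emod (v := v) (N := N) (k + e)
  have : (N v : ℤ) ∣ (red N v (k + e) - (k + e)) := by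
    rw [Int.dvd_iff_emod_eq_zero, Int.sub_emod, hmod, Int.sub_self, Int.zero_emod]
  obtain ⟨j, hj⟩ := this
  have hNpos : (0:ℤ) < (N v : ℤ) := by exact_mod_cast Nat.lt_of_lt_of_le Nat.zero_lt_two hv
  have hlow : (N v : ℤ) * (-1) ≤ (N v : ℤ) * j := by
    have := hb.1; have := hb.2; have := hb'.1; have := hb'.2
    rcases he' with h | h <;> subst h <;> linarith
  have hhigh : (N v : ℤ) * j ≤ (N v : ℤ) * 1 := by
    have := hb.1; have := hb.2; have := hb'.1; have := hb'.2
    rcases he' with h | h <;> subst h <;> linarith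
  have hj1 : (-1 : ℤ) ≤ j := le_of_mul_le_mul_left hlow hNpos
  have hj2 : j ≤ 1 := le_of_mul_le_mul_left hhigh hNpos
  have hj3 : j = -1 ∨ j = 0 ∨ j = 1 := by omega
  rcases hj3 with h | h | h <;> subst h <;> omega

end RedLemmas

section Lists
variable (G : SimpleGraph V) [DecidableRel G.Adj] [DecidableEq V] (N : V → ℕ)
set_option linter.unusedSectionVars false

def extractV (v : V) : List (V × ℤ) → Option (ℤ × List (V × ℤ))
  | [] => none
  | (u, k) :: t =>
    if u = v then some (k, t)
    else if G.Adj u v then (extractV v t).map fun p => (p.1, (u, k) :: p.2)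
    else none

def push (v : V) (e : ℤ) (s : List (V × ℤ)) : List (V × ℤ) :=
  match extractV G v s with
  | some (k, t) => if red N v (k + e) = 0 then t else (v, red N v (k + e)) :: t
  | none => if red N v e = 0 then s else (v, red N v e) :: s

def NormalL : List (V × ℤ) → Prop
  | [] => True
  | (u, k) :: t => red N u k = k ∧ k ≠ 0 ∧ extractV G u t = none ∧ NormalL t

def wt (s : List (V × ℤ)) : ℕ := (s.map fun p => p.2.natAbs).sum

variable {G N}

@[simp] lemma extractV_nil (v : V) : extractV G v [] = none := rfl

@[simp] lemma extractV_cons_self (v : V) (k : ℤ) (t : List (V × ℤ)) :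
    extractV G v ((v, k) :: t) = some (k, t) := by simp [extractV]

lemma extractV_cons_adj {u v : V} (hne : u ≠ v) (h : G.Adj u v) (k : ℤ) (t : List (V × ℤ)) :
    extractV G v ((u, k) :: t) = (extractV G v t).map fun p => (p.1, (u, k) :: p.2) := by
  simp [extractV, hne, h]

lemma extractV_cons_nadj {u v : V} (hne : u ≠ v) (h : ¬ G.Adj u v) (k : ℤ) (t : List (V × ℤ)) :
    extractV G v ((u, k) :: t) = none := by
  simp [extractV, hne, h]

@[simp] lemma wt_nil : wt ([] : List (V × ℤ)) = 0 := rfl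
@[simp] lemma wt_cons (p : V × ℤ) (t : List (V × ℤ)) : wt (p :: t) = p.2.natAbs + wt t := rfl

@[simp] lemma NormalL_nil : NormalL G N ([] : List (V × ℤ)) := trivial

lemma NormalL_cons {u : V} {k : ℤ} {t : List (V × ℤ)} :
    NormalL G N ((u, k) :: t) ↔ red N u k = k ∧ k ≠ 0 ∧ extractV G u t = none ∧ NormalL G N t :=
  Iff.rfl

/-- L2 -/
lemma extract_of_normal {v : V} {s t : List (V × ℤ)} {k : ℤ}
    (hs : NormalL G N s) (h : extractV G v s = some (k, t)) : extractV G v t = none := by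
  induction s generalizing t k with
  | nil => simp at h
  | cons a r ih =>
    obtain ⟨u, j⟩ := a
    rw [NormalL_cons] at hs
    by_cases huv : u = v
    · subst huv
      rw [extractV_cons_self] at h
      obtain ⟨rfl, rfl⟩ : j = k ∧ r = t := by simpa using h
      exact hs.2.2.1
    · by_cases hadj : G.Adj u v
      · rw [extractV_cons_adj huv hadj] at h
        obtain ⟨⟨k', r'⟩, hr', heq⟩ := Option.map_eq_some_iff.mp h
        obtain ⟨rfl, rfl⟩ : k' = k ∧ (u, j) :: r' = t := by simpa using heq
        rw [extractV_cons_adj huv hadj, ih hs.2.2.2 hr']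
        rfl
      · rw [extractV_cons_nadj huv hadj] at h; exact absurd h (by simp)

/-- L4 -/
lemma extract_none_extract {u v : V} {s t : List (V × ℤ)} {k : ℤ} (hadj : G.Adj u v)
    (h : extractV G v s = some (k, t)) (hu : extractV G u s = none) :
    extractV G u t = none := by
  have hne : u ≠ v := hadj.ne
  induction s generalizing t k with
  | nil => simp at h
  | cons a r ih =>
    obtain ⟨w, j⟩ := a
    by_cases hwv : w = v
    · subst hwv
      rw [extractV_cons_self] at h
      obtain ⟨rfl, rfl⟩ : j = k ∧ r = t := by simpa using h
      rw [extractV_cons_adj (fun hh => hne hh.symm) hadj.symm] at hu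
      exact Option.map_eq_none_iff.mp hu
    · by_cases hadjwv : G.Adj w v
      · rw [extractV_cons_adj hwv hadjwv] at h
        obtain ⟨⟨k', r'⟩, hr', heq⟩ := Option.map_eq_some_iff.mp h
        obtain ⟨rfl, rfl⟩ : k' = k ∧ (w, j) :: r' = t := by simpa using heq
        by_cases hwu : w = u
        · subst hwu; rw [extractV_cons_self] at hu; exact absurd hu (by simp)
        · by_cases hadjwu : G.Adj w u
          · rw [extractV_cons_adj hwu hadjwu] at hu
            rw [extractV_cons_adj hwu hadjwu, ih hr' (Option.map_eq_none_iff.mp hu)]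
            rfl
          · rw [extractV_cons_nadj hwu hadjwu]
      · rw [extractV_cons_nadj hwv hadjwv] at h; exact absurd h (by simp)

/-- L5 -/
lemma extract_both {u v : V} {s tv tu : List (V × ℤ)} {k j : ℤ} (hne : u ≠ v)
    (hv : extractV G v s = some (k, tv)) (hu : extractV G u s = some (j, tu)) :
    ∃ r, extractV G u tv = some (j, r) ∧ extractV G v tu = some (k, r) := by
  induction s generalizing tv tu k j with
  | nil => simp at hv
  | cons a s ih =>
    obtain ⟨w, m⟩ := a
    by_cases hwv : w = v
    · cases hwv
      rw [extractV_cons_self] at hv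
      obtain ⟨rfl, rfl⟩ : m = k ∧ s = tv := by simpa using hv
      have hvu : ¬ (v = u) := fun hh => hne hh.symm
      by_cases hadj : G.Adj v u
      · rw [extractV_cons_adj hvu hadj] at hu
        obtain ⟨⟨j', r'⟩, hr', heq⟩ := Option.map_eq_some_iff.mp hu
        obtain ⟨rfl, rfl⟩ : j' = j ∧ (v, m) :: r' = tu := by simpa using heq
        exact ⟨r', hr', by rw [extractV_cons_self]⟩
      · rw [extractV_cons_nadj hvu hadj] at hu; exact absurd hu (by simp)
    · by_cases hwu : w = u
      · cases hwu
        rw [extractV_cons_self] at hu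
        obtain ⟨rfl, rfl⟩ : m = j ∧ s = tu := by simpa using hu
        by_cases hadj : G.Adj u v
        · rw [extractV_cons_adj hne hadj] at hv
          obtain ⟨⟨k', r'⟩, hr', heq⟩ := Option.map_eq_some_iff.mp hv
          obtain ⟨rfl, rfl⟩ : k' = k ∧ (u, m) :: r' = tv := by simpa using heq
          exact ⟨r', by rw [extractV_cons_self], hr'⟩
        · rw [extractV_cons_nadj hne hadj] at hv; exact absurd hv (by simp)
      · by_cases hadjv : G.Adj w v
        · rw [extractV_cons_adj hwv hadjv] at hv
          obtain ⟨⟨k', rv⟩, hrv, heqv⟩ := Option.map_eq_some_iff.mp hv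
          obtain ⟨rfl, rfl⟩ : k' = k ∧ (w, m) :: rv = tv := by simpa using heqv
          by_cases hadju : G.Adj w u
          · rw [extractV_cons_adj hwu hadju] at hu
            obtain ⟨⟨j', ru⟩, hru, hequ⟩ := Option.map_eq_some_iff.mp hu
            obtain ⟨rfl, rfl⟩ : j' = j ∧ (w, m) :: ru = tu := by simpa using hequ
            obtain ⟨r, h1, h2⟩ := ih hrv hru
            exact ⟨(w, m) :: r, by rw [extractV_cons_adj hwu hadju, h1]; rfl,
              by rw [extractV_cons_adj hwv hadjv, h2]; rfl⟩
          · rw [extractV_cons_nadj hwu hadju] at hu; exact absurd hu (by simp)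
        · rw [extractV_cons_nadj hwv hadjv] at hv; exact absurd hv (by simp)

/-- L3 -/
lemma extract_normal {v : V} {s t : List (V × ℤ)} {k : ℤ}
    (hs : NormalL G N s) (h : extractV G v s = some (k, t)) :
    NormalL G N t ∧ red N v k = k ∧ k ≠ 0 := by
  induction s generalizing t k with
  | nil => simp at h
  | cons a r ih =>
    obtain ⟨u, j⟩ := a
    rw [NormalL_cons] at hs
    by_cases huv : u = v
    · subst huv
      rw [extractV_cons_self] at h
      obtain ⟨rfl, rfl⟩ : j = k ∧ r = t := by simpa using h
      exact ⟨hs.2.2.2, hs.1, hs.2.1⟩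
    · by_cases hadj : G.Adj u v
      · rw [extractV_cons_adj huv hadj] at h
        obtain ⟨⟨k', r'⟩, hr', heq⟩ := Option.map_eq_some_iff.mp h
        obtain ⟨rfl, rfl⟩ : k' = k ∧ (u, j) :: r' = t := by simpa using heq
        obtain ⟨hnr', hk, hkne⟩ := ih hs.2.2.2 hr'
        exact ⟨⟨hs.1, hs.2.1, extract_none_extract hadj hr' hs.2.2.1, hnr'⟩, hk, hkne⟩
      · rw [extractV_cons_nadj huv hadj] at h; exact absurd h (by simp)

/-- L7 -/
lemma wt_extract {v : V} {s t : List (V × ℤ)} {k : ℤ}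
    (h : extractV G v s = some (k, t)) : wt s = k.natAbs + wt t := by
  induction s generalizing t k with
  | nil => simp at h
  | cons a r ih =>
    obtain ⟨u, j⟩ := a
    by_cases huv : u = v
    · subst huv
      rw [extractV_cons_self] at h
      obtain ⟨rfl, rfl⟩ : j = k ∧ r = t := by simpa using h
      rfl
    · by_cases hadj : G.Adj u v
      · rw [extractV_cons_adj huv hadj] at h
        obtain ⟨⟨k', r'⟩, hr', heq⟩ := Option.map_eq_some_iff.mp h
        obtain ⟨rfl, rfl⟩ : k' = k ∧ (u, j) :: r' = t := by simpa using heq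
        rw [wt_cons, wt_cons, ih hr']
        omega
      · rw [extractV_cons_nadj huv hadj] at h; exact absurd h (by simp)

/-- Shuffle equivalence: commuting adjacent syllables. -/
inductive Shuf (G : SimpleGraph V) : List (V × ℤ) → List (V × ℤ) → Prop
  | nil : Shuf G [] []
  | cons (a : V × ℤ) {s t : List (V × ℤ)} : Shuf G s t → Shuf G (a :: s) (a :: t)
  | swap (a b : V × ℤ) (s : List (V × ℤ)) : G.Adj a.1 b.1 → Shuf G (a :: b :: s) (b :: a :: s)
  | trans {s t u : List (V × ℤ)} : Shuf G s t → Shuf G t u → Shuf G s u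

lemma Shuf.rfl (s : List (V × ℤ)) : Shuf G s s := by
  induction s with
  | nil => exact Shuf.nil
  | cons a t ih => exact Shuf.cons a ih

lemma Shuf.symm' {s t : List (V × ℤ)} (h : Shuf G s t) : Shuf G t s := by
  induction h with
  | nil => exact Shuf.nil
  | cons a _ ih => exact Shuf.cons a ih
  | swap a b s h => exact Shuf.swap b a s h.symm
  | trans _ _ ih1 ih2 => exact Shuf.trans ih2 ih1

lemma wt_shuf {s t : List (V × ℤ)} (h : Shuf G s t) : wt s = wt t := by
  induction h with
  | nil => rfl
  | cons a _ ih => simp [wt_cons, ih]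
  | swap a b s h => simp [wt_cons]; omega
  | trans _ _ ih1 ih2 => omega

/-- L12 -/
lemma extract_shuf (v : V) {s t : List (V × ℤ)} (h : Shuf G s t) :
    (extractV G v s = none ∧ extractV G v t = none) ∨
      ∃ k s' t', extractV G v s = some (k, s') ∧ extractV G v t = some (k, t') ∧ Shuf G s' t' := by
  induction h with
  | nil => left; simp
  | @cons a s t h ih =>
    obtain ⟨u, m⟩ := a
    by_cases huv : u = v
    · subst huv
      right
      exact ⟨m, s, t, by simp, by simp, h⟩
    · by_cases hadj : G.Adj u v
      · rcases ih with ⟨h1, h2⟩ | ⟨k, s', t', h1, h2, h3⟩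
        · left
          rw [extractV_cons_adj huv hadj, extractV_cons_adj huv hadj, h1, h2]
          simp
        · right
          refine ⟨k, (u, m) :: s', (u, m) :: t', ?_, ?_, Shuf.cons _ h3⟩
          · rw [extractV_cons_adj huv hadj, h1]; rfl
          · rw [extractV_cons_adj huv hadj, h2]; rfl
      · left; rw [extractV_cons_nadj huv hadj, extractV_cons_nadj huv hadj]; simp
  | @swap a b s hadj =>
    obtain ⟨u, m⟩ := a
    obtain ⟨u', m'⟩ := b
    simp only at hadj
    by_cases huv : u = v
    · cases huv
      have hu'v : ¬ (u' = v) := fun hh => (hadj.ne (hh.symm ▸ rfl)).elim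
      right
      refine ⟨m, (u', m') :: s, (u', m') :: s, by simp, ?_, Shuf.rfl _⟩
      rw [extractV_cons_adj hu'v hadj.symm, extractV_cons_self]
      rfl
    · by_cases hu'v : u' = v
      · cases hu'v
        right
        refine ⟨m', (u, m) :: s, (u, m) :: s, ?_, by simp, Shuf.rfl _⟩
        rw [extractV_cons_adj huv hadj, extractV_cons_self]
        rfl
      · by_cases hadj1 : G.Adj u v <;> by_cases hadj2 : G.Adj u' v
        · rcases hx : extractV G v s with _ | ⟨k, s'⟩
          · left
            rw [extractV_cons_adj huv hadj1, extractV_cons_adj hu'v hadj2, hx,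
              extractV_cons_adj hu'v hadj2, extractV_cons_adj huv hadj1, hx]
            simp
          · right
            refine ⟨k, (u, m) :: (u', m') :: s', (u', m') :: (u, m) :: s', ?_, ?_,
              Shuf.swap _ _ _ hadj⟩
            · rw [extractV_cons_adj huv hadj1, extractV_cons_adj hu'v hadj2, hx]; rfl
            · rw [extractV_cons_adj hu'v hadj2, extractV_cons_adj huv hadj1, hx]; rfl
        · left
          rw [extractV_cons_adj huv hadj1, extractV_cons_nadj hu'v hadj2,
            extractV_cons_nadj hu'v hadj2]
          simp
        · left
          rw [extractV_cons_nadj huv hadj1, extractV_cons_adj hu'v hadj2,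
            extractV_cons_nadj huv hadj1]
          simp
        · left
          rw [extractV_cons_nadj huv hadj1, extractV_cons_nadj hu'v hadj2]
          simp
  | @trans s t r h1 h2 ih1 ih2 =>
    rcases ih1 with ⟨ha, hb⟩ | ⟨k, s', t', ha, hb, hc⟩ <;>
      rcases ih2 with ⟨hd, he⟩ | ⟨k', t'', r', hd, he, hf⟩
    · left; exact ⟨ha, he⟩
    · rw [hb] at hd; exact absurd hd (by simp)
    · rw [hb] at hd; exact absurd hd.symm (by simp)
    · rw [hb] at hd
      obtain ⟨rfl, rfl⟩ : k = k' ∧ t' = t'' := by simpa using hd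
      right
      exact ⟨k, s', r', ha, he, Shuf.trans hc hf⟩

/-- L10 -/
lemma shuf_extract {v : V} {s t : List (V × ℤ)} {k : ℤ}
    (h : extractV G v s = some (k, t)) : Shuf G ((v, k) :: t) s := by
  induction s generalizing t k with
  | nil => simp at h
  | cons a r ih =>
    obtain ⟨u, m⟩ := a
    by_cases huv : u = v
    · subst huv
      rw [extractV_cons_self] at h
      obtain ⟨rfl, rfl⟩ : m = k ∧ r = t := by simpa using h
      exact Shuf.rfl _
    · by_cases hadj : G.Adj u v
      · rw [extractV_cons_adj huv hadj] at h
        obtain ⟨⟨k', r'⟩, hr', heq⟩ := Option.map_eq_some_iff.mp h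
        obtain ⟨rfl, rfl⟩ : k' = k ∧ (u, m) :: r' = t := by simpa using heq
        exact Shuf.trans (Shuf.swap (v, k') (u, m) r' hadj.symm) (Shuf.cons _ (ih hr'))
      · rw [extractV_cons_nadj huv hadj] at h; exact absurd h (by simp)

/-- push respects Shuf. -/
lemma push_shuf (v : V) (e : ℤ) {s t : List (V × ℤ)} (h : Shuf G s t) :
    Shuf G (push G N v e s) (push G N v e t) := by
  rcases extract_shuf v h with ⟨h1, h2⟩ | ⟨k, s', t', h1, h2, h3⟩
  · simp only [push, h1, h2]
    split
    · exact h
    · exact Shuf.cons _ h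
  · simp only [push, h1, h2]
    split
    · exact h3
    · exact Shuf.cons _ h3

section PushLemmas
variable {v : V} (hv : 2 ≤ N v)
include hv

/-- L6 -/
lemma push_normal (e : ℤ) {s : List (V × ℤ)} (hs : NormalL G N s) :
    NormalL G N (push G N v e s) := by
  rcases hx : extractV G v s with _ | ⟨k, t⟩
  · simp only [push, hx]
    split
    · exact hs
    · exact NormalL_cons.mpr ⟨red_idem hv e, by assumption, hx, hs⟩
  · obtain ⟨ht, hk, hkne⟩ := extract_normal hs hx
    simp only [push, hx]
    split
    · exact ht
    · exact NormalL_cons.mpr ⟨red_idem hv _, by assumption, extract_of_normal hs hx, ht⟩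

/-- L8: composition law. -/
lemma push_add (e e' : ℤ) {s : List (V × ℤ)} (hs : NormalL G N s) :
    push G N v e (push G N v e' s) = push G N v (e' + e) s := by
  rcases hx : extractV G v s with _ | ⟨k, t⟩
  · by_cases h0 : red N v e' = 0
    · have hd : (N v : ℤ) ∣ e' := (red_eq_zero_iff hv).mp h0
      have hcongr : red N v (e' + e) = red N v e := red_congr (by
        obtain ⟨j, rfl⟩ := hd
        rw [add_comm, Int.add_mul_emod_self_left])
      simp only [push, hx, h0, if_true]
      simp only [push, hx, hcongr]
    · have hx2 : extractV G v ((v, red N v e') :: s) = some (red N v e', s) :=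
        extractV_cons_self v _ s
      simp only [push, hx, h0, if_false, hx2, red_add_red hv]
  · have hnone := extract_of_normal hs hx
    obtain ⟨ht, hk, hkne⟩ := extract_normal hs hx
    by_cases h0 : red N v (k + e') = 0
    · have hd : (N v : ℤ) ∣ (k + e') := (red_eq_zero_iff hv).mp h0
      have hcongr : red N v (k + (e' + e)) = red N v e := red_congr (by
        obtain ⟨j, hj⟩ := hd
        have : k + (e' + e) = e + (N v : ℤ) * j := by omega
        rw [this, Int.add_mul_emod_self_left])
      simp only [push, hx, h0, if_true]
      simp only [push, hnone, hcongr]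
    · have hx2 : extractV G v ((v, red N v (k + e')) :: t) = some (red N v (k + e'), t) :=
        extractV_cons_self v _ t
      simp only [push, hx, h0, if_false, hx2, red_add_red hv]
      rw [show k + e' + e = k + (e' + e) by ring]

lemma push_zero {s : List (V × ℤ)} (hs : NormalL G N s) :
    Shuf G (push G N v 0 s) s := by
  rcases hx : extractV G v s with _ | ⟨k, t⟩
  · simp only [push, hx, red_zero hv, if_true]
    exact Shuf.rfl s
  · obtain ⟨ht, hk, hkne⟩ := extract_normal hs hx
    simp only [push, hx, add_zero, hk, hkne, if_false]
    exact shuf_extract hx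

lemma push_N {s : List (V × ℤ)} (hs : NormalL G N s) :
    Shuf G (push G N v (N v) s) s := by
  rcases hx : extractV G v s with _ | ⟨k, t⟩
  · have h0 : red N v (N v) = 0 := (red_eq_zero_iff hv).mpr ⟨1, (mul_one _).symm⟩
    simp only [push, hx, h0, if_true]
    exact Shuf.rfl s
  · obtain ⟨ht, hk, hkne⟩ := extract_normal hs hx
    have hcongr : red N v (k + N v) = k := by
      rw [red_add_N hv, hk]
    simp only [push, hx, hcongr, hkne, if_false]
    exact shuf_extract hx

/-- weight increases by at most 1 when pushing a single letter. -/
lemma wt_push_le (e : ℤ) (he : e.natAbs = 1) {s : List (V × ℤ)} (hs : NormalL G N s) :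
    wt (push G N v e s) ≤ wt s + 1 := by
  rcases hx : extractV G v s with _ | ⟨k, t⟩
  · simp only [push, hx]
    split
    · omega
    · rw [wt_cons]
      have : (red N v e).natAbs ≤ 1 := by
        have := natAbs_red_le hv (red_zero hv) e he
        simpa using this
      omega
  · obtain ⟨ht, hk, hkne⟩ := extract_normal hs hx
    have hwt := wt_extract hx
    have habs := natAbs_red_le hv hk e he
    simp only [push, hx]
    split
    · omega
    · rw [wt_cons]; omega

end PushLemmas

/-- L14 aux: pushes at adjacent vertices commute up to shuffle (u invisible). -/
lemma push_comm_aux {u v : V} (hadj : G.Adj u v) (a b : ℤ)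
    {s : List (V × ℤ)} (hu : extractV G u s = none) :
    Shuf G (push G N u a (push G N v b s)) (push G N v b (push G N u a s)) := by
  have hne : u ≠ v := hadj.ne
  have hvu : ¬ (v = u) := fun h => hne h.symm
  rcases hx : extractV G v s with _ | ⟨k, tv⟩
  · -- both invisible
    by_cases hrb : red N v b = 0 <;> by_cases hra : red N u a = 0
    · have ev : push G N v b s = s := by simp only [push, hx, hrb, if_true]
      have eu : push G N u a s = s := by simp only [push, hu, hra, if_true]
      rw [ev, eu, ev]
      exact Shuf.rfl s
    · have ev : push G N v b s = s := by simp only [push, hx, hrb, if_true]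
      have eu : push G N u a s = (u, red N u a) :: s := by
        simp only [push, hu, hra, if_false]
      have h3 : extractV G v ((u, red N u a) :: s) = none := by
        rw [extractV_cons_adj hne hadj, hx]; rfl
      have e3 : push G N v b ((u, red N u a) :: s) = (u, red N u a) :: s := by
        simp only [push, h3, hrb, if_true]
      rw [ev, eu, e3]
      exact Shuf.rfl _
    · have ev : push G N v b s = (v, red N v b) :: s := by
        simp only [push, hx, hrb, if_false]
      have eu : push G N u a s = s := by simp only [push, hu, hra, if_true]
      have h3 : extractV G u ((v, red N v b) :: s) = none := by
        rw [extractV_cons_adj hvu hadj.symm, hu]; rfl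
      have e3 : push G N u a ((v, red N v b) :: s) = (v, red N v b) :: s := by
        simp only [push, h3, hra, if_true]
      rw [ev, e3, eu, ev]
      exact Shuf.rfl _
    · have ev : push G N v b s = (v, red N v b) :: s := by
        simp only [push, hx, hrb, if_false]
      have eu : push G N u a s = (u, red N u a) :: s := by
        simp only [push, hu, hra, if_false]
      have h3 : extractV G u ((v, red N v b) :: s) = none := by
        rw [extractV_cons_adj hvu hadj.symm, hu]; rfl
      have h4 : extractV G v ((u, red N u a) :: s) = none := by
        rw [extractV_cons_adj hne hadj, hx]; rfl
      have e3 : push G N u a ((v, red N v b) :: s) =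
          (u, red N u a) :: (v, red N v b) :: s := by
        simp only [push, h3, hra, if_false]
      have e4 : push G N v b ((u, red N u a) :: s) =
          (v, red N v b) :: (u, red N u a) :: s := by
        simp only [push, h4, hrb, if_false]
      rw [ev, e3, eu, e4]
      exact Shuf.swap (u, red N u a) (v, red N v b) s hadj
  · -- v visible, u invisible
    have hutv : extractV G u tv = none := extract_none_extract hadj hx hu
    by_cases hrb : red N v (k + b) = 0 <;> by_cases hra : red N u a = 0
    · have ev : push G N v b s = tv := by simp only [push, hx, hrb, if_true]
      have eu : push G N u a s = s := by simp only [push, hu, hra, if_true]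
      have e3 : push G N u a tv = tv := by simp only [push, hutv, hra, if_true]
      rw [ev, e3, eu, ev]
      exact Shuf.rfl _
    · have ev : push G N v b s = tv := by simp only [push, hx, hrb, if_true]
      have eu : push G N u a s = (u, red N u a) :: s := by
        simp only [push, hu, hra, if_false]
      have e3 : push G N u a tv = (u, red N u a) :: tv := by
        simp only [push, hutv, hra, if_false]
      have h4 : extractV G v ((u, red N u a) :: s) =
          some (k, (u, red N u a) :: tv) := by
        rw [extractV_cons_adj hne hadj, hx]; rfl
      have e4 : push G N v b ((u, red N u a) :: s) = (u, red N u a) :: tv := by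
        simp only [push, h4, hrb, if_true]
      rw [ev, e3, eu, e4]
      exact Shuf.rfl _
    · have ev : push G N v b s = (v, red N v (k + b)) :: tv := by
        simp only [push, hx, hrb, if_false]
      have eu : push G N u a s = s := by simp only [push, hu, hra, if_true]
      have h3 : extractV G u ((v, red N v (k + b)) :: tv) = none := by
        rw [extractV_cons_adj hvu hadj.symm, hutv]; rfl
      have e3 : push G N u a ((v, red N v (k + b)) :: tv) =
          (v, red N v (k + b)) :: tv := by
        simp only [push, h3, hra, if_true]
      rw [ev, e3, eu, ev]
      exact Shuf.rfl _
    · have ev : push G N v b s = (v, red N v (k + b)) :: tv := by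
        simp only [push, hx, hrb, if_false]
      have eu : push G N u a s = (u, red N u a) :: s := by
        simp only [push, hu, hra, if_false]
      have h3 : extractV G u ((v, red N v (k + b)) :: tv) = none := by
        rw [extractV_cons_adj hvu hadj.symm, hutv]; rfl
      have h4 : extractV G v ((u, red N u a) :: s) =
          some (k, (u, red N u a) :: tv) := by
        rw [extractV_cons_adj hne hadj, hx]; rfl
      have e3 : push G N u a ((v, red N v (k + b)) :: tv) =
          (u, red N u a) :: (v, red N v (k + b)) :: tv := by
        simp only [push, h3, hra, if_false]
      have e4 : push G N v b ((u, red N u a) :: s) =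
          (v, red N v (k + b)) :: (u, red N u a) :: tv := by
        simp only [push, h4, hrb, if_false]
      rw [ev, e3, eu, e4]
      exact Shuf.swap _ _ tv hadj

/-- L14: pushes at adjacent vertices commute up to shuffle. -/
lemma push_comm {u v : V} (hadj : G.Adj u v) (a b : ℤ) (s : List (V × ℤ)) :
    Shuf G (push G N u a (push G N v b s)) (push G N v b (push G N u a s)) := by
  have hne : u ≠ v := hadj.ne
  have hvu : ¬ (v = u) := fun h => hne h.symm
  rcases hyu : extractV G u s with _ | ⟨j, tu⟩
  · exact push_comm_aux hadj a b hyu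
  · rcases hyv : extractV G v s with _ | ⟨k, tv⟩
    · exact (push_comm_aux hadj.symm b a hyv).symm'
    · obtain ⟨r, hur, hvr⟩ := extract_both hne hyv hyu
      by_cases hrb : red N v (k + b) = 0 <;> by_cases hra : red N u (j + a) = 0
      · have ev : push G N v b s = tv := by simp only [push, hyv, hrb, if_true]
        have eu : push G N u a s = tu := by simp only [push, hyu, hra, if_true]
        have e3 : push G N u a tv = r := by simp only [push, hur, hra, if_true]
        have e4 : push G N v b tu = r := by simp only [push, hvr, hrb, if_true]
        rw [ev, e3, eu, e4]
        exact Shuf.rfl _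
      · have ev : push G N v b s = tv := by simp only [push, hyv, hrb, if_true]
        have eu : push G N u a s = (u, red N u (j + a)) :: tu := by
          simp only [push, hyu, hra, if_false]
        have e3 : push G N u a tv = (u, red N u (j + a)) :: r := by
          simp only [push, hur, hra, if_false]
        have h4 : extractV G v ((u, red N u (j + a)) :: tu) =
            some (k, (u, red N u (j + a)) :: r) := by
          rw [extractV_cons_adj hne hadj, hvr]; rfl
        have e4 : push G N v b ((u, red N u (j + a)) :: tu) =
            (u, red N u (j + a)) :: r := by
          simp only [push, h4, hrb, if_true]
        rw [ev, e3, eu, e4]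
        exact Shuf.rfl _
      · have ev : push G N v b s = (v, red N v (k + b)) :: tv := by
          simp only [push, hyv, hrb, if_false]
        have eu : push G N u a s = tu := by simp only [push, hyu, hra, if_true]
        have h3 : extractV G u ((v, red N v (k + b)) :: tv) =
            some (j, (v, red N v (k + b)) :: r) := by
          rw [extractV_cons_adj hvu hadj.symm, hur]; rfl
        have e3 : push G N u a ((v, red N v (k + b)) :: tv) =
            (v, red N v (k + b)) :: r := by
          simp only [push, h3, hra, if_true]
        have e4 : push G N v b tu = (v, red N v (k + b)) :: r := by
          simp only [push, hvr, hrb, if_false]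
        rw [ev, e3, eu, e4]
        exact Shuf.rfl _
      · have ev : push G N v b s = (v, red N v (k + b)) :: tv := by
          simp only [push, hyv, hrb, if_false]
        have eu : push G N u a s = (u, red N u (j + a)) :: tu := by
          simp only [push, hyu, hra, if_false]
        have h3 : extractV G u ((v, red N v (k + b)) :: tv) =
            some (j, (v, red N v (k + b)) :: r) := by
          rw [extractV_cons_adj hvu hadj.symm, hur]; rfl
        have h4 : extractV G v ((u, red N u (j + a)) :: tu) =
            some (k, (u, red N u (j + a)) :: r) := by
          rw [extractV_cons_adj hne hadj, hvr]; rfl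
        have e3 : push G N u a ((v, red N v (k + b)) :: tv) =
            (u, red N u (j + a)) :: (v, red N v (k + b)) :: r := by
          simp only [push, h3, hra, if_false]
        have e4 : push G N v b ((u, red N u (j + a)) :: tu) =
            (v, red N v (k + b)) :: (u, red N u (j + a)) :: r := by
          simp only [push, h4, hrb, if_false]
        rw [ev, e3, eu, e4]
        exact Shuf.swap _ _ r hadj

end Lists
section Quot
variable (G : SimpleGraph V) [DecidableRel G.Adj] [DecidableEq V] (N : V → ℕ)
set_option linter.unusedSectionVars false

def NFSetoid : Setoid {s : List (V × ℤ) // NormalL G N s} :=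
  ⟨fun s t => Shuf G s.1 t.1, ⟨fun s => Shuf.rfl _, Shuf.symm', Shuf.trans⟩⟩

def NF := Quotient (NFSetoid G N)

variable (hN : ∀ v, 2 ≤ N v)

def pushQ (v : V) (e : ℤ) : NF G N → NF G N :=
  Quotient.map (fun s => ⟨push G N v e s.1, push_normal (hN v) e s.2⟩)
    (fun _ _ h => push_shuf v e h)

lemma pushQ_mk (v : V) (e : ℤ) (s : List (V × ℤ)) (hs : NormalL G N s) :
    pushQ G N hN v e (Quotient.mk (NFSetoid G N) ⟨s, hs⟩) =
      Quotient.mk (NFSetoid G N) ⟨push G N v e s, push_normal (hN v) e hs⟩ := rfl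

variable {G N}

lemma pushQ_add (v : V) (e e' : ℤ) (x : NF G N) :
    pushQ G N hN v e (pushQ G N hN v e' x) = pushQ G N hN v (e' + e) x := by
  induction x using Quotient.ind with
  | _ s =>
    obtain ⟨s, hs⟩ := s
    rw [pushQ_mk, pushQ_mk, pushQ_mk]
    refine Quotient.sound ?_
    show Shuf G (push G N v e (push G N v e' s)) (push G N v (e' + e) s)
    rw [push_add (hN v) e e' hs]
    exact Shuf.rfl _

lemma pushQ_zero (v : V) (x : NF G N) : pushQ G N hN v 0 x = x := by
  induction x using Quotient.ind with
  | _ s =>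
    obtain ⟨s, hs⟩ := s
    rw [pushQ_mk]
    exact Quotient.sound (push_zero (hN v) hs)

lemma pushQ_N (v : V) (x : NF G N) : pushQ G N hN v (N v) x = x := by
  induction x using Quotient.ind with
  | _ s =>
    obtain ⟨s, hs⟩ := s
    rw [pushQ_mk]
    exact Quotient.sound (push_N (hN v) hs)

variable (G N)

def nfPerm (v : V) : Equiv.Perm (NF G N) where
  toFun := pushQ G N hN v 1
  invFun := pushQ G N hN v (-1)
  left_inv := fun x => by rw [pushQ_add, show (1 : ℤ) + -1 = 0 by ring, pushQ_zero]
  right_inv := fun x => by rw [pushQ_add, show (-1 : ℤ) + 1 = 0 by ring, pushQ_zero]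

variable {G N}

lemma nfPerm_apply (v : V) (x : NF G N) : nfPerm G N hN v x = pushQ G N hN v 1 x := rfl

lemma nfPerm_inv_apply (v : V) (x : NF G N) :
    (nfPerm G N hN v)⁻¹ x = pushQ G N hN v (-1) x := rfl

lemma nfPerm_pow (v : V) (n : ℕ) (x : NF G N) :
    ((nfPerm G N hN v) ^ n) x = pushQ G N hN v n x := by
  induction n with
  | zero => simp [pushQ_zero]
  | succ n ih =>
    rw [pow_succ', Equiv.Perm.mul_apply, nfPerm_apply, ih, pushQ_add,
      show ((n : ℤ) + 1) = ((n + 1 : ℕ) : ℤ) by push_cast; ring]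

lemma nfPerm_relN (v : V) : (nfPerm G N hN v) ^ (N v) = 1 := by
  ext x
  rw [nfPerm_pow, pushQ_N]
  rfl

lemma nfPerm_comm {u v : V} (hadj : G.Adj u v) :
    nfPerm G N hN u * nfPerm G N hN v = nfPerm G N hN v * nfPerm G N hN u := by
  ext x
  induction x using Quotient.ind with
  | _ s =>
    obtain ⟨s, hs⟩ := s
    exact Quotient.sound (push_comm hadj 1 1 s)

end Quot


section Hom
variable (G : SimpleGraph V) [DecidableRel G.Adj] [DecidableEq V] (N : V → ℕ) (hN : ∀ v, 2 ≤ N v)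
set_option linter.unusedSectionVars false

lemma rels_eq_one {r : FreeGroup V} (hr : r ∈ ngpRels G N) :
    (QuotientGroup.mk r : NGP G N) = 1 := by
  rw [QuotientGroup.eq_one_iff]
  exact Subgroup.subset_normalClosure hr

lemma of_pow_N (v : V) : (PresentedGroup.of v : NGP G N) ^ (N v) = 1 := by
  have h := rels_eq_one G N (show _ ∈ ngpRels G N from Or.inl ⟨v, rfl⟩)
  rw [show ((QuotientGroup.mk (FreeGroup.of v ^ N v) : NGP G N)) =
    (PresentedGroup.of v : NGP G N) ^ N v from rfl] at h
  exact h

lemma of_comm {u v : V} (hadj : G.Adj u v) :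
    Commute (PresentedGroup.of u : NGP G N) (PresentedGroup.of v) := by
  have h := rels_eq_one G N (show _ ∈ ngpRels G N from Or.inr ⟨u, v, hadj, rfl⟩)
  rw [show ((QuotientGroup.mk (FreeGroup.of u * FreeGroup.of v * (FreeGroup.of u)⁻¹ *
      (FreeGroup.of v)⁻¹) : NGP G N)) =
    (PresentedGroup.of u : NGP G N) * PresentedGroup.of v * (PresentedGroup.of u)⁻¹ *
      (PresentedGroup.of v)⁻¹ from rfl] at h
  show PresentedGroup.of u * PresentedGroup.of v = PresentedGroup.of v * PresentedGroup.of u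
  have h2 : (PresentedGroup.of u : NGP G N) * PresentedGroup.of v * (PresentedGroup.of u)⁻¹
      = PresentedGroup.of v := by
    have h3 := (mul_eq_one_iff_eq_inv (G := NGP G N)).mp h
    simpa using h3
  calc (PresentedGroup.of u : NGP G N) * PresentedGroup.of v
      = (PresentedGroup.of u * PresentedGroup.of v * (PresentedGroup.of u)⁻¹) *
        PresentedGroup.of u := by group
    _ = PresentedGroup.of v * PresentedGroup.of u := by rw [h2]

lemma of_zpow_period (v : V) (k : ℤ) :
    (PresentedGroup.of v : NGP G N) ^ (k + N v) = (PresentedGroup.of v : NGP G N) ^ k := by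
  rw [zpow_add, zpow_natCast, of_pow_N, mul_one]

def phi : NGP G N →* (Equiv.Perm (NF G N))ᵐᵒᵖ :=
  PresentedGroup.toGroup (f := fun v => MulOpposite.op (nfPerm G N hN v)) (by
    rintro r (⟨v, rfl⟩ | ⟨u, v, hadj, rfl⟩)
    · rw [map_pow, FreeGroup.lift_apply_of, ← MulOpposite.op_pow, nfPerm_relN hN v,
        MulOpposite.op_one]
    · simp only [map_mul, map_inv, FreeGroup.lift_apply_of]
      have hc : MulOpposite.op (nfPerm G N hN u) * MulOpposite.op (nfPerm G N hN v) =
          MulOpposite.op (nfPerm G N hN v) * MulOpposite.op (nfPerm G N hN u) := by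
        rw [← MulOpposite.op_mul, ← MulOpposite.op_mul, nfPerm_comm hN hadj]
      rw [hc]
      group)

def act (g : NGP G N) (x : NF G N) : NF G N := (phi G N hN g).unop x

lemma act_mul (g h : NGP G N) (x : NF G N) :
    act G N hN (g * h) x = act G N hN h (act G N hN g x) := by
  unfold act
  rw [map_mul, MulOpposite.unop_mul, Equiv.Perm.mul_apply]

lemma act_one (x : NF G N) : act G N hN 1 x = x := by
  unfold act
  rw [map_one, MulOpposite.unop_one, Equiv.Perm.one_apply]

lemma act_of (u : V) (x : NF G N) :
    act G N hN (PresentedGroup.of u) x = pushQ G N hN u 1 x := by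
  unfold act
  rw [show phi G N hN (PresentedGroup.of u) = MulOpposite.op (nfPerm G N hN u) from
    PresentedGroup.toGroup.of _]
  rfl

lemma act_of_inv (u : V) (x : NF G N) :
    act G N hN (PresentedGroup.of u)⁻¹ x = pushQ G N hN u (-1) x := by
  unfold act
  rw [map_inv, show phi G N hN (PresentedGroup.of u) = MulOpposite.op (nfPerm G N hN u) from
    PresentedGroup.toGroup.of _, MulOpposite.unop_inv, MulOpposite.unop_op]
  rfl

end Hom


section Auto
variable (G : SimpleGraph V) [DecidableRel G.Adj] [DecidableEq V] (N : V → ℕ)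
set_option linter.unusedSectionVars false

def letter (l : V × Bool) : NGP G N :=
  if l.2 then PresentedGroup.of l.1 else (PresentedGroup.of l.1)⁻¹

lemma evalWord_append (w w' : List (V × Bool)) :
    evalWord G N (w ++ w') = evalWord G N w * evalWord G N w' := by
  simp [evalWord]

lemma evalWord_nil : evalWord G N ([] : List (V × Bool)) = 1 := rfl

lemma evalWord_singleton (l : V × Bool) : evalWord G N [l] = letter G N l := by
  simp [evalWord, letter]

def reps (v : V) (k : ℤ) : List (V × Bool) := List.replicate k.natAbs (v, decide (0 ≤ k))

lemma reps_length (v : V) (k : ℤ) : (reps v k).length = k.natAbs := List.length_replicate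

lemma evalWord_replicate (v : V) (b : Bool) (n : ℕ) :
    evalWord G N (List.replicate n (v, b)) =
      (if b then (PresentedGroup.of v : NGP G N) else (PresentedGroup.of v)⁻¹) ^ n := by
  induction n with
  | zero => simp [evalWord]
  | succ n ih =>
    rw [List.replicate_succ]
    have : ((v, b) :: List.replicate n (v, b)) = [(v, b)] ++ List.replicate n (v, b) := rfl
    rw [this, evalWord_append, ih, evalWord_singleton, pow_succ']
    rfl

lemma eval_reps (v : V) (k : ℤ) :
    evalWord G N (reps v k) = (PresentedGroup.of v : NGP G N) ^ k := by
  unfold reps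
  rcases le_or_gt 0 k with h | h
  · rw [evalWord_replicate, if_pos (by simpa using h)]
    rw [← zpow_natCast, Int.natAbs_of_nonneg h]
  · rw [evalWord_replicate, if_neg (by simpa using not_le.mpr h)]
    rw [inv_pow, ← zpow_natCast, ← zpow_neg]
    congr 1
    omega

lemma valid_reps (v : V) (k : ℤ) (h : k < 0 → N v ≠ 2) : ValidWord N (reps v k) := by
  intro l hl hfalse
  rw [reps, List.mem_replicate] at hl
  obtain ⟨hn, rfl⟩ := hl
  simp only at hfalse ⊢
  have : ¬ (0 ≤ k) := by simpa using hfalse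
  exact h (by omega)

lemma valid_append {w w' : List (V × Bool)} (h : ValidWord N w) (h' : ValidWord N w') :
    ValidWord N (w ++ w') := by
  intro l hl
  rcases List.mem_append.mp hl with hh | hh
  · exact h l hh
  · exact h' l hh

lemma valid_of_append_left {w w' : List (V × Bool)} (h : ValidWord N (w ++ w')) :
    ValidWord N w := fun l hl => h l (List.mem_append.mpr (Or.inl hl))

lemma valid_of_append_right {w w' : List (V × Bool)} (h : ValidWord N (w ++ w')) :
    ValidWord N w' := fun l hl => h l (List.mem_append.mpr (Or.inr hl))

lemma run_append (f : V → ℤ) (w₁ w₂ : List (V × Bool)) :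
    run G N f (w₁ ++ w₂) = Option.bind (run G N f w₁) (fun g => run G N g w₂) := by
  induction w₁ generalizing f with
  | nil => rfl
  | cons l w₁ ih =>
    show run G N f (l :: (w₁ ++ w₂)) = _
    rw [run]
    rcases hs : step G N f l with _ | g
    · rw [show run G N f (l :: w₁) = none by rw [run, hs]]
      rfl
    · rw [show run G N f (l :: w₁) = run G N g w₁ by rw [run, hs]]
      exact ih g

lemma step_false_ne_two {f g : V → ℤ} {l : V × Bool} (h : step G N f l = some g)
    (hb : l.2 = false) : N l.1 ≠ 2 := by
  unfold step at h
  rw [hb] at h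
  simp only [Bool.false_eq_true, if_false] at h
  split at h
  · next hcond => exact hcond.1
  · exact absurd h (by simp)

lemma run_valid {f g : V → ℤ} {w : List (V × Bool)} (h : run G N f w = some g) :
    ValidWord N w := by
  induction w generalizing f with
  | nil => intro l hl; simp at hl
  | cons l w ih =>
    rw [run] at h
    rcases hs : step G N f l with _ | g'
    · rw [hs] at h; exact absurd h (by simp)
    · rw [hs] at h
      intro l' hl' hb
      rcases List.mem_cons.mp hl' with rfl | hm
      · exact step_false_ne_two G N hs hb
      · exact ih h l' hm hb

lemma run_none_split {f : V → ℤ} {w : List (V × Bool)} (h : run G N f w = none) :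
    ∃ p l rest f₀, w = p ++ l :: rest ∧ run G N f p = some f₀ ∧ step G N f₀ l = none := by
  induction w generalizing f with
  | nil => rw [run] at h; exact absurd h (by simp)
  | cons l w ih =>
    rw [run] at h
    rcases hs : step G N f l with _ | g
    · exact ⟨[], l, w, f, rfl, rfl, hs⟩
    · rw [hs] at h
      obtain ⟨p, l', rest, f₀, rfl, hrun, hstep⟩ := ih h
      refine ⟨l :: p, l', rest, f₀, rfl, ?_, hstep⟩
      rw [run, hs]
      exact hrun

lemma pc_zero : IsPoweredClique G N (fun _ => 0) := by
  constructor
  · intro x hx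
    simp at hx
  · intro v
    constructor <;> intro _ <;> constructor <;> simp <;> positivity

lemma step_pc {f g : V → ℤ} {l : V × Bool} (hf : IsPoweredClique G N f)
    (h : step G N f l = some g) : IsPoweredClique G N g := by
  obtain ⟨u, b⟩ := l
  unfold step at h
  simp only at h
  have main : ∀ (d : ℤ), (0 ≤ f u ∧ 0 ≤ d ∧ f u + d ≤ ((N u / 2 : ℕ) : ℤ) ∧ d ≤ 1) ∨
      (N u ≠ 2 ∧ d ≤ 0 ∧ -((N u / 2 : ℕ) : ℤ) ≤ f u + d ∧ f u + d < 0) →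
      g = (fun x => if x = u then f u + d else if G.Adj u x then f x else 0) →
      IsPoweredClique G N g := by
    intro d hd hg
    subst hg
    constructor
    · intro x hx y hy hxy
      simp only [Set.mem_setOf_eq] at hx hy
      by_cases hxu : x = u
      · subst hxu
        rw [if_neg (fun hh : y = x => hxy hh.symm)] at hy
        by_cases hadj : G.Adj x y
        · exact hadj
        · rw [if_neg hadj] at hy; exact absurd rfl hy
      · rw [if_neg hxu] at hx
        by_cases hyu : y = u
        · subst hyu
          by_cases hadj : G.Adj y x
          · exact hadj.symm
          · rw [if_neg hadj] at hx; exact absurd rfl hx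
        · rw [if_neg hyu] at hy
          by_cases hadjx : G.Adj u x
          · by_cases hadjy : G.Adj u y
            · rw [if_pos hadjx] at hx
              rw [if_pos hadjy] at hy
              exact (hf.1 hx hy hxy)
            · rw [if_neg hadjy] at hy; exact absurd rfl hy
          · rw [if_neg hadjx] at hx; exact absurd rfl hx
    · intro x
      by_cases hxu : x = u
      · subst hxu
        simp only [if_pos rfl]
        constructor
        · intro h2
          have := (hf.2 x).1 h2
          have hN2 : (N x / 2 : ℕ) = 1 := by omega
          rcases hd with ⟨h1, h2', h3, h4⟩ | ⟨hne, _, _, _⟩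
          · rw [hN2] at h3; norm_num at h3 ⊢; omega
          · exact absurd h2 hne
        · intro h2
          have := (hf.2 x).2 h2
          rcases hd with ⟨h1, h2', h3, h4⟩ | ⟨_, h2', h3, h4⟩ <;> omega
      · simp only [if_neg hxu]
        by_cases hadj : G.Adj u x
        · simp only [if_pos hadj]
          exact hf.2 x
        · simp only [if_neg hadj]
          constructor <;> intro _ <;> constructor <;> simp <;> positivity
  split at h
  · -- b = true
    split at h
    · next hcond =>
      refine main 1 (Or.inl ⟨hcond.1, by omega, by omega, le_refl 1⟩) ?_
      exact (Option.some.inj h).symm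
    · exact absurd h (by simp)
  · split at h
    · next hcond =>
      refine main (-1) (Or.inr ⟨hcond.1, by omega, by omega, by omega⟩) ?_
      exact (Option.some.inj h).symm
    · exact absurd h (by simp)

lemma run_pc {f g : V → ℤ} {w : List (V × Bool)} (hf : IsPoweredClique G N f)
    (h : run G N f w = some g) : IsPoweredClique G N g := by
  induction w generalizing f with
  | nil => rw [run] at h; exact (Option.some.inj h) ▸ hf
  | cons l w ih =>
    rw [run] at h
    rcases hs : step G N f l with _ | g'
    · rw [hs] at h; exact absurd h (by simp)
    · rw [hs] at h
      exact ih (step_pc G N hf hs) h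

end Auto


section Auto2
variable (G : SimpleGraph V) [DecidableRel G.Adj] [DecidableEq V] (N : V → ℕ)
set_option linter.unusedSectionVars false

lemma run_cons (f : V → ℤ) (l : V × Bool) (w : List (V × Bool)) :
    run G N f (l :: w) = match step G N f l with
      | none => none
      | some g => run G N g w := rfl

lemma run_singleton {f g : V → ℤ} {l : V × Bool} :
    run G N f [l] = some g ↔ step G N f l = some g := by
  rw [run_cons]
  rcases hs : step G N f l with _ | g'
  · simp
  · exact Iff.rfl

lemma step_some {f g : V → ℤ} {u : V} {b : Bool} (h : step G N f (u, b) = some g) :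
    (b = true ∧ 0 ≤ f u ∧ f u < ((N u / 2 : ℕ) : ℤ) ∧
       g = fun x => if x = u then f u + 1 else if G.Adj u x then f x else 0) ∨
    (b = false ∧ N u ≠ 2 ∧ -((N u / 2 : ℕ) : ℤ) < f u ∧ f u ≤ 0 ∧
       g = fun x => if x = u then f u - 1 else if G.Adj u x then f x else 0) := by
  unfold step at h
  simp only at h
  cases b
  · simp only [Bool.false_eq_true, if_false] at h
    split at h
    · next hc => exact Or.inr ⟨rfl, hc.1, hc.2.1, hc.2.2, (Option.some.inj h).symm⟩
    · exact absurd h (by simp)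
  · simp only [if_true] at h
    split at h
    · next hc => exact Or.inl ⟨rfl, hc.1, hc.2, (Option.some.inj h).symm⟩
    · exact absurd h (by simp)

lemma step_none {f : V → ℤ} {u : V} {b : Bool} (h : step G N f (u, b) = none) :
    (b = true ∧ ¬(0 ≤ f u ∧ f u < ((N u / 2 : ℕ) : ℤ))) ∨
    (b = false ∧ ¬(N u ≠ 2 ∧ -((N u / 2 : ℕ) : ℤ) < f u ∧ f u ≤ 0)) := by
  unfold step at h
  simp only at h
  cases b
  · simp only [Bool.false_eq_true, if_false] at h
    split at h
    · exact absurd h (by simp)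
    · next hc => exact Or.inr ⟨rfl, hc⟩
  · simp only [if_true] at h
    split at h
    · exact absurd h (by simp)
    · next hc => exact Or.inl ⟨rfl, hc⟩

/-- The shuffle-to-the-end invariant. -/
lemma ginv {w : List (V × Bool)} {f : V → ℤ} (hrun : run G N (fun _ => 0) w = some f)
    (v : V) :
    ∃ r, ValidWord N r ∧ evalWord G N (r ++ reps v (f v)) = evalWord G N w ∧
      r.length + (f v).natAbs = w.length := by
  induction w using List.reverseRecOn generalizing f with
  | nil =>
    obtain rfl := Option.some.inj (show some (fun _ : V => (0:ℤ)) = some f from hrun)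
    exact ⟨[], (fun l hl => by simp at hl), by simp [reps], by simp [reps]⟩
  | append_singleton w l ih =>
    rw [run_append] at hrun
    rcases hr0 : run G N (fun _ => 0) w with _ | f₀
    · rw [hr0] at hrun; exact absurd hrun (by simp)
    rw [hr0] at hrun
    replace hrun : run G N f₀ [l] = some f := hrun
    obtain ⟨u, b⟩ := l
    have hstep := (run_singleton G N).mp hrun
    have hwl : evalWord G N (w ++ [(u, b)]) = evalWord G N w * letter G N (u, b) := by
      rw [evalWord_append, evalWord_singleton]
    rcases step_some G N hstep with ⟨hb, h0, hlt, hg⟩ | ⟨hb, hne2, hlt, hle, hg⟩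
    all_goals subst hb
    · -- positive letter at u
      by_cases hvu : v = u
      · subst hvu
        obtain ⟨r, hvr, hev, hlen⟩ := ih hr0
        have hfv : f v = f₀ v + 1 := by rw [hg]; simp
        have hreps : reps v (f v) = reps v (f₀ v) ++ [(v, true)] := by
          unfold reps
          rw [hfv]
          rw [show (f₀ v + 1).natAbs = (f₀ v).natAbs + 1 by omega]
          rw [List.replicate_succ']
          rw [decide_eq_true (by omega : (0:ℤ) ≤ f₀ v + 1),
            decide_eq_true (h0 : (0:ℤ) ≤ f₀ v)]
        refine ⟨r, hvr, ?_, ?_⟩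
        · rw [hreps, ← List.append_assoc, evalWord_append, hev, hwl, evalWord_singleton]
        · rw [hfv]
          simp only [List.length_append, List.length_singleton]
          omega
      · by_cases hadj : G.Adj u v
        · obtain ⟨r, hvr, hev, hlen⟩ := ih hr0
          have hfv : f v = f₀ v := by rw [hg]; simp [hvu, hadj]
          have hcomm : Commute (letter G N (u, true))
              ((PresentedGroup.of v : NGP G N) ^ f v) := by
            unfold letter
            simp only [if_true]
            exact (of_comm G N hadj).zpow_right (f v)
          refine ⟨r ++ [(u, true)], valid_append N hvr (fun l' hl' hb' => by
            simp at hl'; subst hl'; simp at hb'), ?_, ?_⟩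
          · rw [List.append_assoc]
            rw [evalWord_append, evalWord_append, evalWord_singleton, eval_reps, hwl]
            rw [evalWord_append, eval_reps] at hev
            rw [hcomm.eq, ← mul_assoc, hfv, hev]
          · rw [hfv]
            simp only [List.length_append, List.length_singleton]
            omega
        · have hfv : f v = 0 := by rw [hg]; simp [hvu, hadj]
          have hrunfull : run G N (fun _ => 0) (w ++ [(u, true)]) = some f := by
            rw [run_append, hr0]
            exact hrun
          refine ⟨w ++ [(u, true)], run_valid G N hrunfull, ?_, ?_⟩
          · rw [hfv, show reps v 0 = [] by simp [reps], List.append_nil]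
          · rw [hfv]
            simp
    · -- negative letter at u
      by_cases hvu : v = u
      · subst hvu
        obtain ⟨r, hvr, hev, hlen⟩ := ih hr0
        have hfv : f v = f₀ v - 1 := by rw [hg]; simp
        have hreps : reps v (f v) = reps v (f₀ v) ++ [(v, false)] := by
          unfold reps
          rw [hfv]
          rw [show (f₀ v - 1).natAbs = (f₀ v).natAbs + 1 by omega]
          rw [List.replicate_succ']
          rw [decide_eq_false (by omega : ¬ ((0:ℤ) ≤ f₀ v - 1))]
          rcases lt_or_eq_of_le hle with hlt0 | heq0
          · rw [decide_eq_false (by omega : ¬ ((0:ℤ) ≤ f₀ v))]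
          · rw [show (f₀ v).natAbs = 0 by omega]
            simp
        refine ⟨r, hvr, ?_, ?_⟩
        · rw [hreps, ← List.append_assoc, evalWord_append, hev, hwl, evalWord_singleton]
        · rw [hfv]
          simp only [List.length_append, List.length_singleton]
          omega
      · by_cases hadj : G.Adj u v
        · obtain ⟨r, hvr, hev, hlen⟩ := ih hr0
          have hfv : f v = f₀ v := by rw [hg]; simp [hvu, hadj]
          have hcomm : Commute (letter G N (u, false))
              ((PresentedGroup.of v : NGP G N) ^ f v) := by
            unfold letter
            simp only [Bool.false_eq_true, if_false]
            exact ((of_comm G N hadj).zpow_right (f v)).inv_left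
          refine ⟨r ++ [(u, false)], valid_append N hvr (fun l' hl' hb' => by
            simp at hl'; subst hl'; exact hne2), ?_, ?_⟩
          · rw [List.append_assoc]
            rw [evalWord_append, evalWord_append, evalWord_singleton, eval_reps, hwl]
            rw [evalWord_append, eval_reps] at hev
            rw [hcomm.eq, ← mul_assoc, hfv, hev]
          · rw [hfv]
            simp only [List.length_append, List.length_singleton]
            omega
        · have hfv : f v = 0 := by rw [hg]; simp [hvu, hadj]
          have hrunfull : run G N (fun _ => 0) (w ++ [(u, false)]) = some f := by
            rw [run_append, hr0]
            exact hrun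
          refine ⟨w ++ [(u, false)], run_valid G N hrunfull, ?_, ?_⟩
          · rw [hfv, show reps v 0 = [] by simp [reps], List.append_nil]
          · rw [hfv]
            simp

end Auto2


section Auto3
variable (G : SimpleGraph V) [DecidableRel G.Adj] [DecidableEq V] (N : V → ℕ)
set_option linter.unusedSectionVars false

lemma valid_cons_tail {l : V × Bool} {w : List (V × Bool)} (h : ValidWord N (l :: w)) :
    ValidWord N w := fun l' hl' => h l' (List.mem_cons_of_mem _ hl')

lemma of_zpow_congr (v : V) {a b : ℤ} (j : ℤ) (h : a = b + (N v : ℤ) * j) :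
    (PresentedGroup.of v : NGP G N) ^ a = PresentedGroup.of v ^ b := by
  rw [h, zpow_add, zpow_mul, zpow_natCast, of_pow_N, one_zpow, mul_one]

lemma reject_shorter (hN : ∀ v, 2 ≤ N v) {w : List (V × Bool)} (hval : ValidWord N w)
    (hrun : run G N (fun _ => 0) w = none) :
    ∃ w', ValidWord N w' ∧ evalWord G N w' = evalWord G N w ∧ w'.length < w.length := by
  obtain ⟨p, l, rest, f₀, rfl, hp, hstep⟩ := run_none_split G N hrun
  obtain ⟨u, b⟩ := l
  have hpc : IsPoweredClique G N f₀ := run_pc G N (pc_zero G N) hp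
  obtain ⟨r, hvr, hev, hlen⟩ := ginv G N hp u
  have hrest : ValidWord N rest :=
    valid_cons_tail N (valid_of_append_right N hval)
  have hewp : evalWord G N (p ++ (u, b) :: rest) =
      evalWord G N p * letter G N (u, b) * evalWord G N rest := by
    rw [show p ++ (u, b) :: rest = (p ++ [(u, b)]) ++ rest from by simp, evalWord_append,
      evalWord_append, evalWord_singleton]
  have hevp : evalWord G N r * PresentedGroup.of u ^ (f₀ u) = evalWord G N p := by
    rw [← eval_reps, ← evalWord_append]
    exact hev
  have hcz : ((N u - N u / 2 - 1 : ℕ) : ℤ) = (N u : ℤ) - ((N u / 2 : ℕ) : ℤ) - 1 := by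
    have := hN u
    omega
  rcases step_none G N hstep with ⟨hb, hc⟩ | ⟨hb, hc⟩ <;> subst hb
  · -- positive letter rejected
    rcases not_and_or.mp hc with h1 | h1
    · -- f₀ u < 0 : cancellation
      have hneg : f₀ u < 0 := by omega
      have hne2 : N u ≠ 2 := fun h2 => by have := (hpc.2 u).1 h2; omega
      refine ⟨(r ++ reps u (f₀ u + 1)) ++ rest, ?_, ?_, ?_⟩
      · exact valid_append N (valid_append N hvr (valid_reps N u _ (fun _ => hne2))) hrest
      · rw [evalWord_append, evalWord_append, eval_reps, hewp]
        have key : evalWord G N r * PresentedGroup.of u ^ (f₀ u + 1) =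
            evalWord G N p * letter G N (u, true) := by
          rw [zpow_add_one, ← mul_assoc, hevp]
          simp [letter]
        rw [key]
      · simp only [List.length_append, List.length_cons, reps_length]
        omega
    · -- f₀ u = N u / 2 : wrap around
      have hub : f₀ u ≤ ((N u / 2 : ℕ) : ℤ) := by
        rcases eq_or_ne (N u) 2 with h2 | h2
        · have := (hpc.2 u).1 h2
          have : ((N u / 2 : ℕ) : ℤ) = 1 := by rw [h2]; norm_num
          omega
        · exact ((hpc.2 u).2 h2).2
      have hm : f₀ u = ((N u / 2 : ℕ) : ℤ) := by omega
      refine ⟨(r ++ List.replicate (N u - N u / 2 - 1) (u, false)) ++ rest, ?_, ?_, ?_⟩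
      · refine valid_append N (valid_append N hvr ?_) hrest
        intro l' hl' hb'
        rw [List.mem_replicate] at hl'
        obtain ⟨hc0, rfl⟩ := hl'
        simp only
        omega
      · rw [evalWord_append, evalWord_append, evalWord_replicate, hewp]
        simp only [Bool.false_eq_true, if_false]
        have key : evalWord G N r * ((PresentedGroup.of u : NGP G N)⁻¹) ^ (N u - N u / 2 - 1) =
            evalWord G N p * letter G N (u, true) := by
          rw [inv_pow, ← zpow_natCast, ← zpow_neg]
          rw [show (-((N u - N u / 2 - 1 : ℕ) : ℤ)) = (f₀ u + 1) + (N u : ℤ) * (-1) from by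
            rw [hcz, hm]; ring, of_zpow_congr G N u (-1) rfl]
          rw [zpow_add_one, ← mul_assoc, hevp]
          simp [letter]
        rw [key]
      · simp only [List.length_append, List.length_cons, List.length_replicate, reps_length]
        omega
  · -- negative letter rejected
    have hne2 : N u ≠ 2 := hval (u, false) (by simp) rfl
    have hcase : 0 < f₀ u ∨ f₀ u ≤ -((N u / 2 : ℕ) : ℤ) := by
      by_contra hcon
      push_neg at hcon
      exact hc ⟨hne2, by omega, by omega⟩
    rcases hcase with h1 | h1
    · -- cancellation
      refine ⟨(r ++ reps u (f₀ u - 1)) ++ rest, ?_, ?_, ?_⟩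
      · exact valid_append N (valid_append N hvr (valid_reps N u _ (fun _ => hne2))) hrest
      · rw [evalWord_append, evalWord_append, eval_reps, hewp]
        have key : evalWord G N r * PresentedGroup.of u ^ (f₀ u - 1) =
            evalWord G N p * letter G N (u, false) := by
          rw [zpow_sub_one, ← mul_assoc, hevp]
          simp [letter]
        rw [key]
      · simp only [List.length_append, List.length_cons, reps_length]
        omega
    · -- wrap around
      have hm : f₀ u = -((N u / 2 : ℕ) : ℤ) := by
        have := ((hpc.2 u).2 hne2).1
        omega
      refine ⟨(r ++ List.replicate (N u - N u / 2 - 1) (u, true)) ++ rest, ?_, ?_, ?_⟩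
      · refine valid_append N (valid_append N hvr ?_) hrest
        intro l' hl' hb'
        rw [List.mem_replicate] at hl'
        obtain ⟨hc0, rfl⟩ := hl'
        simp at hb'
      · rw [evalWord_append, evalWord_append, evalWord_replicate, hewp]
        simp only [if_true]
        have key : evalWord G N r * (PresentedGroup.of u : NGP G N) ^ (N u - N u / 2 - 1) =
            evalWord G N p * letter G N (u, false) := by
          rw [← zpow_natCast]
          rw [show ((N u - N u / 2 - 1 : ℕ) : ℤ) = (f₀ u - 1) + (N u : ℤ) * 1 from by
            rw [hcz, hm]; ring, of_zpow_congr G N u 1 rfl]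
          rw [zpow_sub_one, ← mul_assoc, hevp]
          simp [letter]
        rw [key]
      · simp only [List.length_append, List.length_cons, List.length_replicate, reps_length]
        omega

end Auto3


section Final
variable (G : SimpleGraph V) [DecidableRel G.Adj] [DecidableEq V] (N : V → ℕ) (hN : ∀ v, 2 ≤ N v)
set_option linter.unusedSectionVars false

def baseNF : NF G N := Quotient.mk (NFSetoid G N) ⟨[], trivial⟩

def wtQ : NF G N → ℕ := Quotient.lift (fun s => wt s.1) (fun _ _ h => wt_shuf h)

lemma wtQ_mk (s : List (V × ℤ)) (hs : NormalL G N s) :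
    wtQ G N (Quotient.mk (NFSetoid G N) ⟨s, hs⟩) = wt s := rfl

lemma map_fst_cons_adj {u v : V} (hne : u ≠ v) (hadj : G.Adj u v) (K : ℤ) (t : List (V × ℤ)) :
    (extractV G v ((u, K) :: t)).map Prod.fst = (extractV G v t).map Prod.fst := by
  rw [extractV_cons_adj hne hadj]
  rcases h : extractV G v t with _ | ⟨k2, t2⟩ <;> rfl

lemma map_fst_extract_other {u v : V} (hne : u ≠ v) (hadj : G.Adj u v)
    {s t : List (V × ℤ)} {k : ℤ} (hx : extractV G u s = some (k, t)) :
    (extractV G v t).map Prod.fst = (extractV G v s).map Prod.fst := by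
  rcases hy : extractV G v s with _ | ⟨k2, t2⟩
  · rw [extract_none_extract hadj.symm hx hy]
  · obtain ⟨r, _, h2⟩ := extract_both hne hy hx
    rw [h2]
    rfl

lemma act_letter (l : V × Bool) (x : NF G N) :
    act G N hN (letter G N l) x = pushQ G N hN l.1 (if l.2 then 1 else -1) x := by
  obtain ⟨u, b⟩ := l
  cases b
  · simp only [letter, Bool.false_eq_true, if_false]
    exact act_of_inv G N hN u x
  · simp only [letter, if_true]
    exact act_of G N hN u x

lemma act_eval_append (w : List (V × Bool)) (l : V × Bool) (x : NF G N) :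
    act G N hN (evalWord G N (w ++ [l])) x =
      pushQ G N hN l.1 (if l.2 then 1 else -1) (act G N hN (evalWord G N w) x) := by
  rw [evalWord_append, act_mul, evalWord_singleton, act_letter]

lemma wtQ_push_le (v : V) (e : ℤ) (he : e.natAbs = 1) (x : NF G N) :
    wtQ G N (pushQ G N hN v e x) ≤ wtQ G N x + 1 := by
  induction x using Quotient.ind with
  | _ s =>
    obtain ⟨s, hs⟩ := s
    rw [pushQ_mk, wtQ_mk, wtQ_mk]
    exact wt_push_le (hN v) e he hs

lemma wtQ_act_le (w : List (V × Bool)) (x : NF G N) :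
    wtQ G N (act G N hN (evalWord G N w) x) ≤ wtQ G N x + w.length := by
  induction w using List.reverseRecOn with
  | nil => rw [show evalWord G N [] = 1 from rfl, act_one]; simp
  | append_singleton w l ih =>
    rw [act_eval_append]
    have h1 := wtQ_push_le G N hN l.1 (if l.2 then 1 else -1) (by cases l.2 <;> simp)
      (act G N hN (evalWord G N w) x)
    simp only [List.length_append, List.length_singleton]
    omega

/-- The key invariant: an accepted run builds a normal form of weight = word length,
whose right-frontier exponents match the automaton state. -/
lemma nf_invariant {w : List (V × Bool)} {f : V → ℤ}
    (hrun : run G N (fun _ => 0) w = some f) :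
    ∃ (s : List (V × ℤ)) (hs : NormalL G N s),
      act G N hN (evalWord G N w) (baseNF G N) = Quotient.mk (NFSetoid G N) ⟨s, hs⟩ ∧
      wt s = w.length ∧
      ∀ v, (extractV G v s).map Prod.fst =
        (if f v = 0 then none else some (red N v (f v))) := by
  induction w using List.reverseRecOn generalizing f with
  | nil =>
    obtain rfl := Option.some.inj (show some (fun _ : V => (0 : ℤ)) = some f from hrun)
    refine ⟨[], trivial, ?_, rfl, ?_⟩
    · rw [show evalWord G N [] = 1 from rfl, act_one]
      rfl
    · intro v
      simp
  | append_singleton w l ih =>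
    rw [run_append] at hrun
    rcases hr0 : run G N (fun _ => 0) w with _ | f₀
    · rw [hr0] at hrun; exact absurd hrun (by simp)
    rw [hr0] at hrun
    replace hrun : run G N f₀ [l] = some f := hrun
    obtain ⟨u, b⟩ := l
    have hstep := (run_singleton G N).mp hrun
    obtain ⟨s, hs, hact, hwt, hvis⟩ := ih hr0
    have hNu := hN u
    have hcb := red_bounds (hN u) (0 : ℤ)
    have hactnew : ∀ (e : ℤ),
        act G N hN (evalWord G N (w ++ [(u, b)])) (baseNF G N) =
          pushQ G N hN u (if b then 1 else -1) (Quotient.mk (NFSetoid G N) ⟨s, hs⟩) := by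
      intro _
      rw [act_eval_append, hact]
    rcases step_some G N hstep with ⟨hb, h0, hlt, hg⟩ | ⟨hb, hne2, hlt, hle, hg⟩ <;> subst hb
    · -- positive letter
      have hred0 : red N u (f₀ u) = f₀ u := red_eq_self (hN u) (by omega) (by
        have := (c_facts (hN u)).2
        omega)
      have hred1 : red N u (f₀ u + 1) = f₀ u + 1 := red_eq_self (hN u) (by omega) (by
        have := (c_facts (hN u)).2
        omega)
      have hfu : f u = f₀ u + 1 := by rw [hg]; simp
      have hfadj : ∀ v, v ≠ u → G.Adj u v → f v = f₀ v := by
        intro v hne hadj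
        rw [hg]
        simp [hne, hadj]
      have hfnadj : ∀ v, v ≠ u → ¬ G.Adj u v → f v = 0 := by
        intro v hne hadj
        rw [hg]
        simp [hne, hadj]
      by_cases hf0 : f₀ u = 0
      · have hnone : extractV G u s = none := by
          have := hvis u
          rw [if_pos hf0] at this
          exact Option.map_eq_none_iff.mp this
        have hpush : push G N u 1 s = (u, 1) :: s := by
          simp only [push, hnone, red_one (hN u)]
          norm_num
        refine ⟨(u, 1) :: s, NormalL_cons.mpr ⟨red_one (hN u), one_ne_zero, hnone, hs⟩,
          ?_, ?_, ?_⟩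
        · rw [hactnew 1, pushQ_mk]
          exact congrArg _ (Subtype.ext hpush)
        · rw [wt_cons, hwt]
          simp only [List.length_append, List.length_singleton, Int.natAbs_one]
          omega
        · intro v
          by_cases hvu : v = u
          · subst hvu
            rw [extractV_cons_self, hfu, hf0]
            norm_num [red_one (hN v)]
          · have hne : u ≠ v := fun hh => hvu hh.symm
            by_cases hadj : G.Adj u v
            · rw [map_fst_cons_adj G hne hadj, hfadj v hvu hadj]
              exact hvis v
            · rw [extractV_cons_nadj hne hadj, hfnadj v hvu hadj]
              simp
      · have hvu2 : Option.map Prod.fst (extractV G u s) = some (f₀ u) := by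
          rw [hvis u, if_neg hf0, hred0]
        obtain ⟨⟨k0, t⟩, hx, hk0⟩ := Option.map_eq_some_iff.mp hvu2
        simp only at hk0
        subst hk0
        have hpush : push G N u 1 s = (u, f₀ u + 1) :: t := by
          simp only [push, hx, hred1]
          rw [if_neg (by omega)]
        have hnt := extract_normal hs hx
        refine ⟨(u, f₀ u + 1) :: t, NormalL_cons.mpr ⟨hred1, by omega,
          extract_of_normal hs hx, hnt.1⟩, ?_, ?_, ?_⟩
        · rw [hactnew 1, pushQ_mk]
          exact congrArg _ (Subtype.ext hpush)
        · rw [wt_cons]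
          have := wt_extract hx
          simp only [List.length_append, List.length_singleton]
          omega
        · intro v
          by_cases hvu : v = u
          · subst hvu
            rw [extractV_cons_self, hfu, if_neg (by omega), hred1]
            rfl
          · have hne : u ≠ v := fun hh => hvu hh.symm
            by_cases hadj : G.Adj u v
            · rw [map_fst_cons_adj G hne hadj, map_fst_extract_other G hne hadj hx,
                hfadj v hvu hadj]
              exact hvis v
            · rw [extractV_cons_nadj hne hadj, hfnadj v hvu hadj]
              simp
    · -- negative letter
      have hcf := (c_facts (hN u)).1
      have hcf2 := (c_facts (hN u)).2
      have hred0 : red N u (f₀ u) = f₀ u := red_eq_self (hN u) (by omega) (by omega)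
      have hfu : f u = f₀ u - 1 := by rw [hg]; simp
      have hfadj : ∀ v, v ≠ u → G.Adj u v → f v = f₀ v := by
        intro v hne hadj
        rw [hg]
        simp [hne, hadj]
      have hfnadj : ∀ v, v ≠ u → ¬ G.Adj u v → f v = 0 := by
        intro v hne hadj
        rw [hg]
        simp [hne, hadj]
      have hfune : f u ≠ 0 := by omega
      by_cases hf0 : f₀ u = 0
      · have hnone : extractV G u s = none := by
          have := hvis u
          rw [if_pos hf0] at this
          exact Option.map_eq_none_iff.mp this
        have hrn1 : red N u (-1) = -1 := red_neg_one_of (hN u) hne2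
        have hpush : push G N u (-1) s = (u, -1) :: s := by
          simp only [push, hnone, hrn1]
          norm_num
        refine ⟨(u, -1) :: s, NormalL_cons.mpr ⟨hrn1, by norm_num, hnone, hs⟩, ?_, ?_, ?_⟩
        · rw [hactnew (-1), pushQ_mk]
          exact congrArg _ (Subtype.ext hpush)
        · rw [wt_cons, hwt]
          simp only [List.length_append, List.length_singleton]
          omega
        · intro v
          by_cases hvu : v = u
          · subst hvu
            rw [extractV_cons_self, hfu, hf0, if_neg (by norm_num), show (0:ℤ) - 1 = -1 from
              by ring, hrn1]
            rfl
          · have hne : u ≠ v := fun hh => hvu hh.symm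
            by_cases hadj : G.Adj u v
            · rw [map_fst_cons_adj G hne hadj, hfadj v hvu hadj]
              exact hvis v
            · rw [extractV_cons_nadj hne hadj, hfnadj v hvu hadj]
              simp
      · have hvu2 : Option.map Prod.fst (extractV G u s) = some (f₀ u) := by
          rw [hvis u, if_neg hf0, hred0]
        obtain ⟨⟨k0, t⟩, hx, hk0⟩ := Option.map_eq_some_iff.mp hvu2
        simp only at hk0
        subst hk0
        have hnt := extract_normal hs hx
        have hKval : red N u (f₀ u - 1) ≠ 0 ∧ (red N u (f₀ u - 1)).natAbs = (f₀ u).natAbs + 1 := by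
          by_cases hclip : -(((N u - 1) / 2 : ℕ) : ℤ) ≤ f₀ u - 1
          · have : red N u (f₀ u - 1) = f₀ u - 1 := red_eq_self (hN u) hclip (by omega)
            rw [this]
            constructor <;> omega
          · -- wrap-around: f₀ u = -c, N even
            have hlow : -(((N u - 1) / 2 : ℕ) : ℤ) ≤ f₀ u := by
              have := red_bounds (hN u) (f₀ u)
              rw [hred0] at this
              exact this.1
            have hcongr : red N u (f₀ u - 1) = red N u ((N u : ℤ) + f₀ u - 1) := by
              apply red_congr
              rw [show (N u : ℤ) + f₀ u - 1 = (f₀ u - 1) + (N u : ℤ) * 1 from by ring,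
                Int.add_mul_emod_self_left]
            have hval : red N u (f₀ u - 1) = (N u : ℤ) + f₀ u - 1 := by
              rw [hcongr]
              exact red_eq_self (hN u) (by omega) (by omega)
            rw [hval]
            constructor <;> omega
          
        have hpush : push G N u (-1) s = (u, red N u (f₀ u - 1)) :: t := by
          simp only [push, hx]
          rw [show f₀ u + -1 = f₀ u - 1 from by ring, if_neg hKval.1]
        refine ⟨(u, red N u (f₀ u - 1)) :: t, NormalL_cons.mpr ⟨red_idem (hN u) _, hKval.1,
          extract_of_normal hs hx, hnt.1⟩, ?_, ?_, ?_⟩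
        · rw [hactnew (-1), pushQ_mk]
          exact congrArg _ (Subtype.ext hpush)
        · rw [wt_cons]
          have := wt_extract hx
          simp only [List.length_append, List.length_singleton]
          omega
        · intro v
          by_cases hvu : v = u
          · subst hvu
            rw [extractV_cons_self, if_neg hfune, hfu]
            rfl
          · have hne : u ≠ v := fun hh => hvu hh.symm
            by_cases hadj : G.Adj u v
            · rw [map_fst_cons_adj G hne hadj, map_fst_extract_other G hne hadj hx,
                hfadj v hvu hadj]
              exact hvis v
            · rw [extractV_cons_nadj hne hadj, hfnadj v hvu hadj]
              simp

end Final

end NGPproof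

open NGPproof in
theorem stmt1 [Fintype V] [DecidableEq V] (G : SimpleGraph V) [DecidableRel G.Adj]
    (N : V → ℕ) (hN : ∀ v, 2 ≤ N v) (w : List (V × Bool)) :
    IsGeodesic G N w ↔ Accepts G N (fun _ => 0) w := by
  constructor
  · intro hgeo
    rcases hr : run G N (fun _ => 0) w with _ | g
    · obtain ⟨w', hv', he', hl'⟩ := reject_shorter G N hN hgeo.1 hr
      have := hgeo.2 w' hv' he'
      omega
    · exact ⟨g, hr, run_pc G N (pc_zero G N) hr⟩
  · rintro ⟨g, hr, hpcg⟩
    refine ⟨run_valid G N hr, ?_⟩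
    intro w' hv' he'
    obtain ⟨s, hs, hact, hwt, hvis⟩ := nf_invariant G N hN hr
    have h1 : wtQ G N (act G N hN (evalWord G N w) (baseNF G N)) = w.length := by
      rw [hact, wtQ_mk, hwt]
    have h2 : wtQ G N (act G N hN (evalWord G N w') (baseNF G N)) ≤ w'.length := by
      have := wtQ_act_le G N hN w' (baseNF G N)
      have hb : wtQ G N (baseNF G N) = 0 := rfl
      omega
    rw [he', h1] at h2
    exact h2
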